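/- Let u and v be vertices of a series-parallel dag such that the fork-path of u is a prefix of the fork-path of v. Then v ≼ u if and only if d(v) ≤ d(u). -/

import Mathlib

/-- Series-parallel dag shapes: a single vertex, serial composition
(identifying the sink of `g1` with the source of `g2`), or parallel
composition (fresh source with edges to the sources of `g1`, `g2`, and a
fresh sink with edges from their sinks). -/
inductive SP : Type where
  | vert : SP
  | seq : SP → SP → SP
  | par : SP → SP → SP

/-- Non-source vertices of a series-parallel dag. -/
def NV : SP → Type
  | .vert => Empty
  | .seq g1 g2 => NV g1 ⊕ NV g2
  | .par g1 g2 => ((Unit ⊕ NV g1) ⊕ (Unit ⊕ NV g2)) ⊕ Unit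

/-- Vertices: the source, or a non-source vertex. -/
abbrev V (g : SP) : Type := Unit ⊕ NV g

/-- The (unique) source of a series-parallel dag. -/
def src (g : SP) : V g := Sum.inl ()

/-- Embedding of the first component of a serial composition. -/
def emb1 (g1 g2 : SP) : V g1 → V (.seq g1 g2)
  | .inl _ => Sum.inl ()
  | .inr n => Sum.inr (Sum.inl n)

/-- The (unique) sink of a series-parallel dag. -/
def snk : (g : SP) → V g
  | .vert => Sum.inl ()
  | .seq g1 g2 =>
    match snk g2 with
    | .inl _ => emb1 g1 g2 (snk g1)
    | .inr n => Sum.inr (Sum.inr n)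
  | .par _ _ => Sum.inr (Sum.inr ())

/-- Embedding of the second component of a serial composition:
the source of `g2` is identified with the sink of `g1`. -/
def emb2 (g1 g2 : SP) : V g2 → V (.seq g1 g2)
  | .inl _ => emb1 g1 g2 (snk g1)
  | .inr n => Sum.inr (Sum.inr n)

/-- Embedding of the left branch of a parallel composition. -/
def embL (g1 g2 : SP) (v : V g1) : V (.par g1 g2) := Sum.inr (Sum.inl (Sum.inl v))

/-- Embedding of the right branch of a parallel composition. -/
def embR (g1 g2 : SP) (v : V g2) : V (.par g1 g2) := Sum.inr (Sum.inl (Sum.inr v))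

/-- Edges of a series-parallel dag. -/
def Edge : (g : SP) → V g → V g → Prop
  | .vert, _, _ => False
  | .seq g1 g2, u, v =>
      (∃ a b, Edge g1 a b ∧ u = emb1 g1 g2 a ∧ v = emb1 g1 g2 b) ∨
      (∃ a b, Edge g2 a b ∧ u = emb2 g1 g2 a ∧ v = emb2 g1 g2 b)
  | .par g1 g2, u, v =>
      (∃ a b, Edge g1 a b ∧ u = embL g1 g2 a ∧ v = embL g1 g2 b) ∨
      (∃ a b, Edge g2 a b ∧ u = embR g1 g2 a ∧ v = embR g1 g2 b) ∨
      (u = src (.par g1 g2) ∧ v = embL g1 g2 (src g1)) ∨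
      (u = src (.par g1 g2) ∧ v = embR g1 g2 (src g2)) ∨
      (u = embL g1 g2 (snk g1) ∧ v = snk (.par g1 g2)) ∨
      (u = embR g1 g2 (snk g2) ∧ v = snk (.par g1 g2))

/-- `Reach g u v` (`u ≼ v`): there is a directed path (possibly empty) from `u` to `v`. -/
def Reach (g : SP) : V g → V g → Prop := Relation.ReflTransGen (Edge g)

/-- The dag-depth of a vertex (the length of a longest path ending at it),
computed by the DePa rules: the source has depth 0; at a fork both children
have depth one greater; at a join the new vertex has depth
`1 + max` of the depths of the joining vertices. -/
def depth : (g : SP) → V g → ℕ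
  | .vert, _ => 0
  | .seq _ _, .inl _ => 0
  | .seq g1 _, .inr (.inl n) => depth g1 (Sum.inr n)
  | .seq g1 g2, .inr (.inr n) => depth g1 (snk g1) + depth g2 (Sum.inr n)
  | .par _ _, .inl _ => 0
  | .par g1 _, .inr (.inl (.inl v)) => 1 + depth g1 v
  | .par _ g2, .inr (.inl (.inr v)) => 1 + depth g2 v
  | .par g1 g2, .inr (.inr _) => 1 + max (1 + depth g1 (snk g1)) (1 + depth g2 (snk g2))

/-- The fork-path of a vertex, as a list of bits (`false` = L, `true` = R),
outermost fork first: the root has the empty path, a fork extends the path by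
L and R for the two branches, and a join restores the common prefix. -/
def fpath : (g : SP) → V g → List Bool
  | .vert, _ => []
  | .seq _ _, .inl _ => []
  | .seq g1 _, .inr (.inl n) => fpath g1 (Sum.inr n)
  | .seq _ g2, .inr (.inr n) => fpath g2 (Sum.inr n)
  | .par _ _, .inl _ => []
  | .par g1 _, .inr (.inl (.inl v)) => false :: fpath g1 v
  | .par _ g2, .inr (.inl (.inr v)) => true :: fpath g2 v
  | .par _ _, .inr (.inr _) => []

/-- Longest common prefix of two lists. -/
def lcp : List Bool → List Bool → List Bool
  | a :: as, b :: bs => if a = b then a :: lcp as bs else []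
  | _, _ => []


/-! ### Auxiliary lemmas -/

theorem depth_src' (g : SP) (t : Unit) : depth g (Sum.inl t) = 0 := by cases g <;> rfl

theorem fpath_src' (g : SP) (t : Unit) : fpath g (Sum.inl t) = [] := by cases g <;> rfl

theorem depth_pos (g : SP) (n : NV g) : 1 ≤ depth g (Sum.inr n) := by
  induction g with
  | vert => exact n.elim
  | seq g1 g2 ih1 ih2 =>
    rcases n with n | n
    · exact ih1 n
    · exact le_trans (ih2 n) (Nat.le_add_left _ _)
  | par g1 g2 ih1 ih2 =>
    rcases n with ((a | a) | t) <;> exact Nat.le_add_right 1 _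

theorem eq_src_of_depth_le (g : SP) (v : V g) (h : depth g v ≤ 0) : v = Sum.inl () := by
  rcases v with t | n
  · rfl
  · exact absurd h (by have := depth_pos g n; omega)

theorem depth_emb1 (g1 g2 : SP) (x : V g1) :
    depth (.seq g1 g2) (emb1 g1 g2 x) = depth g1 x := by
  rcases x with t | n
  · rw [show emb1 g1 g2 (Sum.inl t) = Sum.inl () from rfl, depth_src', depth_src']
  · rfl

theorem depth_emb2 (g1 g2 : SP) (x : V g2) :
    depth (.seq g1 g2) (emb2 g1 g2 x) = depth g1 (snk g1) + depth g2 x := by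
  rcases x with t | n
  · rw [show emb2 g1 g2 (Sum.inl t) = emb1 g1 g2 (snk g1) from rfl, depth_emb1, depth_src']
    rfl
  · rfl

theorem snk_seq (g1 g2 : SP) : snk (.seq g1 g2) = emb2 g1 g2 (snk g2) := by
  show (match snk g2 with
    | .inl _ => emb1 g1 g2 (snk g1)
    | .inr n => Sum.inr (Sum.inr n)) = _
  rcases h : snk g2 with t | n <;> simp [emb2]

theorem fpath_emb1 (g1 g2 : SP) (x : V g1) :
    fpath (.seq g1 g2) (emb1 g1 g2 x) = fpath g1 x := by
  rcases x with t | n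
  · rw [show emb1 g1 g2 (Sum.inl t) = Sum.inl () from rfl, fpath_src', fpath_src']
  · rfl

theorem fpath_snk (g : SP) : fpath g (snk g) = [] := by
  induction g with
  | vert => rfl
  | seq g1 g2 ih1 ih2 =>
    rw [snk_seq]
    rcases h : snk g2 with t | n
    · rw [show emb2 g1 g2 (Sum.inl t) = emb1 g1 g2 (snk g1) from rfl, fpath_emb1, ih1]
    · show fpath g2 (Sum.inr n) = []
      rw [← h, ih2]
  | par g1 g2 ih1 ih2 => rfl

theorem fpath_emb2 (g1 g2 : SP) (x : V g2) :
    fpath (.seq g1 g2) (emb2 g1 g2 x) = fpath g2 x := by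
  rcases x with t | n
  · rw [show emb2 g1 g2 (Sum.inl t) = emb1 g1 g2 (snk g1) from rfl, fpath_emb1, fpath_snk,
      fpath_src']
  · rfl

theorem edge_emb1 (g1 g2 : SP) {a b : V g1} (e : Edge g1 a b) :
    Edge (.seq g1 g2) (emb1 g1 g2 a) (emb1 g1 g2 b) := Or.inl ⟨a, b, e, rfl, rfl⟩

theorem edge_emb2 (g1 g2 : SP) {a b : V g2} (e : Edge g2 a b) :
    Edge (.seq g1 g2) (emb2 g1 g2 a) (emb2 g1 g2 b) := Or.inr ⟨a, b, e, rfl, rfl⟩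

theorem edge_embL (g1 g2 : SP) {a b : V g1} (e : Edge g1 a b) :
    Edge (.par g1 g2) (embL g1 g2 a) (embL g1 g2 b) := Or.inl ⟨a, b, e, rfl, rfl⟩

theorem edge_embR (g1 g2 : SP) {a b : V g2} (e : Edge g2 a b) :
    Edge (.par g1 g2) (embR g1 g2 a) (embR g1 g2 b) := Or.inr (Or.inl ⟨a, b, e, rfl, rfl⟩)

theorem reach_emb1 (g1 g2 : SP) {a b : V g1} (h : Reach g1 a b) :
    Reach (.seq g1 g2) (emb1 g1 g2 a) (emb1 g1 g2 b) :=
  Relation.ReflTransGen.lift _ (fun _ _ e => edge_emb1 g1 g2 e) _ _ h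

theorem reach_emb2 (g1 g2 : SP) {a b : V g2} (h : Reach g2 a b) :
    Reach (.seq g1 g2) (emb2 g1 g2 a) (emb2 g1 g2 b) :=
  Relation.ReflTransGen.lift _ (fun _ _ e => edge_emb2 g1 g2 e) _ _ h

theorem reach_embL (g1 g2 : SP) {a b : V g1} (h : Reach g1 a b) :
    Reach (.par g1 g2) (embL g1 g2 a) (embL g1 g2 b) :=
  Relation.ReflTransGen.lift _ (fun _ _ e => edge_embL g1 g2 e) _ _ h

theorem reach_embR (g1 g2 : SP) {a b : V g2} (h : Reach g2 a b) :
    Reach (.par g1 g2) (embR g1 g2 a) (embR g1 g2 b) :=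
  Relation.ReflTransGen.lift _ (fun _ _ e => edge_embR g1 g2 e) _ _ h

theorem depth_le_of_edge : ∀ (g : SP) (u v : V g), Edge g u v → depth g u ≤ depth g v := by
  intro g
  induction g with
  | vert => intro u v e; exact e.elim
  | seq g1 g2 ih1 ih2 =>
    rintro u v (⟨a, b, e, rfl, rfl⟩ | ⟨a, b, e, rfl, rfl⟩)
    · rw [depth_emb1, depth_emb1]; exact ih1 a b e
    · rw [depth_emb2, depth_emb2]; exact Nat.add_le_add_left (ih2 a b e) _
  | par g1 g2 ih1 ih2 =>
    rintro u v (⟨a, b, e, rfl, rfl⟩ | ⟨a, b, e, rfl, rfl⟩ | ⟨rfl, rfl⟩ | ⟨rfl, rfl⟩ |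
      ⟨rfl, rfl⟩ | ⟨rfl, rfl⟩)
    · exact Nat.add_le_add_left (ih1 a b e) 1
    · exact Nat.add_le_add_left (ih2 a b e) 1
    · exact Nat.zero_le _
    · exact Nat.zero_le _
    · exact Nat.add_le_add_left (le_trans (Nat.le_add_left _ 1) (le_max_left _ _)) 1
    · exact Nat.add_le_add_left (le_trans (Nat.le_add_left _ 1) (le_max_right _ _)) 1

theorem depth_mono (g : SP) {a b : V g} (h : Reach g a b) : depth g a ≤ depth g b := by
  induction h with
  | refl => exact le_refl _
  | tail p e ih => exact le_trans ih (depth_le_of_edge _ _ _ e)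

theorem reach_snk : ∀ (g : SP) (v : V g), Reach g v (snk g) := by
  intro g
  induction g with
  | vert =>
    rintro (t | n)
    · exact Relation.ReflTransGen.refl
    · exact n.elim
  | seq g1 g2 ih1 ih2 =>
    have key : ∀ a : V g1, Reach (.seq g1 g2) (emb1 g1 g2 a) (snk (.seq g1 g2)) := by
      intro a
      rw [snk_seq]
      refine Relation.ReflTransGen.trans (reach_emb1 g1 g2 (ih1 a)) ?_
      exact reach_emb2 g1 g2 (ih2 (Sum.inl ()))
    rintro (t | (n | n))
    · exact key (Sum.inl t)
    · exact key (Sum.inr n)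
    · rw [snk_seq]
      exact reach_emb2 g1 g2 (ih2 (Sum.inr n))
  | par g1 g2 ih1 ih2 =>
    have keyL : ∀ a : V g1, Reach (.par g1 g2) (embL g1 g2 a) (snk (.par g1 g2)) := by
      intro a
      refine Relation.ReflTransGen.tail (reach_embL g1 g2 (ih1 a)) ?_
      exact Or.inr (Or.inr (Or.inr (Or.inr (Or.inl ⟨rfl, rfl⟩))))
    have keyR : ∀ a : V g2, Reach (.par g1 g2) (embR g1 g2 a) (snk (.par g1 g2)) := by
      intro a
      refine Relation.ReflTransGen.tail (reach_embR g1 g2 (ih2 a)) ?_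
      exact Or.inr (Or.inr (Or.inr (Or.inr (Or.inr ⟨rfl, rfl⟩))))
    rintro (t | ((a | a) | t))
    · refine Relation.ReflTransGen.head ?_ (keyL (src g1))
      exact Or.inr (Or.inr (Or.inl ⟨rfl, rfl⟩))
    · exact keyL a
    · exact keyR a
    · exact Relation.ReflTransGen.refl

theorem reach_src : ∀ (g : SP) (v : V g), Reach g (src g) v := by
  intro g
  induction g with
  | vert =>
    rintro (t | n)
    · exact Relation.ReflTransGen.refl
    · exact n.elim
  | seq g1 g2 ih1 ih2 =>
    have key : ∀ a : V g1, Reach (.seq g1 g2) (src (.seq g1 g2)) (emb1 g1 g2 a) := by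
      intro a
      exact reach_emb1 g1 g2 (ih1 a)
    rintro (t | (n | n))
    · exact key (Sum.inl t)
    · exact key (Sum.inr n)
    · refine Relation.ReflTransGen.trans (key (snk g1)) ?_
      exact reach_emb2 g1 g2 (ih2 (Sum.inr n))
  | par g1 g2 ih1 ih2 =>
    have keyL : ∀ a : V g1, Reach (.par g1 g2) (src (.par g1 g2)) (embL g1 g2 a) := by
      intro a
      refine Relation.ReflTransGen.head ?_ (reach_embL g1 g2 (ih1 a))
      exact Or.inr (Or.inr (Or.inl ⟨rfl, rfl⟩))
    have keyR : ∀ a : V g2, Reach (.par g1 g2) (src (.par g1 g2)) (embR g1 g2 a) := by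
      intro a
      refine Relation.ReflTransGen.head ?_ (reach_embR g1 g2 (ih2 a))
      exact Or.inr (Or.inr (Or.inr (Or.inl ⟨rfl, rfl⟩)))
    rintro (t | ((a | a) | t))
    · exact Relation.ReflTransGen.refl
    · exact keyL a
    · exact keyR a
    · refine Relation.ReflTransGen.tail (keyL (snk g1)) ?_
      exact Or.inr (Or.inr (Or.inr (Or.inr (Or.inl ⟨rfl, rfl⟩))))

theorem depth_le_snk (g : SP) (v : V g) : depth g v ≤ depth g (snk g) :=
  depth_mono g (reach_snk g v)

theorem reach_of_le : ∀ (g : SP) (u v : V g),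
    fpath g u <+: fpath g v → depth g v ≤ depth g u → Reach g v u := by
  intro g
  induction g with
  | vert =>
    rintro (t | n) (t' | n') h hd
    · exact Relation.ReflTransGen.refl
    · exact n'.elim
    · exact n.elim
    · exact n.elim
  | seq g1 g2 ih1 ih2 =>
    rintro (t | (n | n)) v h hd
    · -- u is the source
      rw [depth_src'] at hd
      rw [eq_src_of_depth_le _ v hd]
      exact Relation.ReflTransGen.refl
    all_goals rcases v with t' | (m | m)
    · exact reach_src _ _
    · -- both in g1
      exact reach_emb1 g1 g2 (ih1 (Sum.inr n) (Sum.inr m) h hd)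
    · -- u in g1 (non-source), v in g2 (non-source): depth contradiction
      exfalso
      have h1 : depth g1 (Sum.inr n) ≤ depth g1 (snk g1) := depth_le_snk g1 _
      have h2 : 1 ≤ depth g2 (Sum.inr m) := depth_pos g2 m
      have hd' : depth g1 (snk g1) + depth g2 (Sum.inr m) ≤ depth g1 (Sum.inr n) := hd
      omega
    · exact reach_src _ _
    · -- u in g2, v in g1 : always reachable
      refine Relation.ReflTransGen.trans (reach_emb1 g1 g2 (reach_snk g1 (Sum.inr m))) ?_
      exact reach_emb2 g1 g2 (reach_src g2 (Sum.inr n))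
    · -- both in g2
      have hd' : depth g1 (snk g1) + depth g2 (Sum.inr m) ≤
          depth g1 (snk g1) + depth g2 (Sum.inr n) := hd
      exact reach_emb2 g1 g2 (ih2 (Sum.inr n) (Sum.inr m) h (by omega))
  | par g1 g2 ih1 ih2 =>
    rintro (t | ((a | a) | t)) v h hd
    · -- u is the source
      rw [depth_src'] at hd
      rw [eq_src_of_depth_le _ v hd]
      exact Relation.ReflTransGen.refl
    · -- u = embL a
      rcases v with t' | ((b | b) | t')
      · exact reach_src _ _
      · -- v = embL b
        have h' := (List.cons_prefix_cons.mp h).2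
        have hd' : 1 + depth g1 b ≤ 1 + depth g1 a := hd
        exact reach_embL g1 g2 (ih1 a b h' (by omega))
      · -- v = embR b : fpath mismatch
        exact absurd (List.cons_prefix_cons.mp h).1 (by decide)
      · -- v = snk : fpath u must be nil, contradiction
        exact absurd (List.prefix_nil.mp h) (List.cons_ne_nil _ _)
    · -- u = embR a
      rcases v with t' | ((b | b) | t')
      · exact reach_src _ _
      · exact absurd (List.cons_prefix_cons.mp h).1 (by decide)
      · have h' := (List.cons_prefix_cons.mp h).2
        have hd' : 1 + depth g2 b ≤ 1 + depth g2 a := hd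
        exact reach_embR g1 g2 (ih2 a b h' (by omega))
      · exact absurd (List.prefix_nil.mp h) (List.cons_ne_nil _ _)
    · -- u = snk
      exact reach_snk _ v

/-- if the fork-path of `u` is a prefix of the fork-path of `v`,
then `v ≼ u` iff `d(v) ≤ d(u)`. -/
theorem reach_rev_iff_depth_le_of_prefix (g : SP) (u v : V g)
    (h : fpath g u <+: fpath g v) :
    Reach g v u ↔ depth g v ≤ depth g u :=
  ⟨fun r => depth_mono g r, fun hd => reach_of_le g u v h hd⟩
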